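/- Let Y ∈ {-1,1}^{l×n} and let its columns be partitioned into g blocks Y_1, ..., Y_g of sizes n_1, ..., n_g with n_1 + ... + n_g = n and each n_m ≥ 1. Let S_0 and S_m be the global and local cosine-similarity matrices defined entrywise by [S_0]_{ij} = ⟨y_{i,:}, y_{j,:}⟩/(‖y_{i,:}‖‖y_{j,:}‖) and [S_m]_{ij} = ⟨y_{m,i,:}, y_{m,j,:}⟩/(‖y_{m,i,:}‖‖y_{m,j,:}‖), and let L_0 = Diag(S_0·1) − S_0 and L_m = Diag(S_m·1) − S_m be the corresponding Laplacian matrices. Then L_0 = Σ_{m=1}^{g} (n_m/n) L_m. -/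
import Mathlib

open Matrix BigOperators

/-- The Laplacian of a square matrix `S`: `Diag(S·1) − S`. -/
def laplacian {l : ℕ} (S : Matrix (Fin l) (Fin l) ℝ) : Matrix (Fin l) (Fin l) ℝ :=
  Matrix.diagonal (fun i => ∑ j, S i j) - S

lemma lap_linear {l : ℕ} {g : ℕ} (c : Fin g → ℝ) (S : Fin g → Matrix (Fin l) (Fin l) ℝ) :
    laplacian (∑ m, c m • S m) = ∑ m, c m • laplacian (S m) := by
  ext i j
  simp only [laplacian, Matrix.sub_apply, Matrix.diagonal_apply, Matrix.sum_apply,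
    Matrix.smul_apply, smul_eq_mul, Finset.sum_apply]
  rw [Finset.sum_comm]
  by_cases h : i = j <;> simp [h, Finset.mul_sum, mul_sub, Finset.sum_sub_distrib]

/-- The global cosine-similarity Laplacian is the size-weighted combination of the
local cosine-similarity Laplacians. -/
theorem stmt_2 (l g n : ℕ) (nm : Fin g → ℕ) (hnm : ∀ m, 1 ≤ nm m)
    (hn : n = ∑ m, nm m)
    (Y : Matrix (Fin l) ((m : Fin g) × Fin (nm m)) ℝ)
    (hY : ∀ i t, Y i t = 1 ∨ Y i t = -1)
    (S0 : Matrix (Fin l) (Fin l) ℝ)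
    (hS0 : ∀ i j, S0 i j = (∑ t, Y i t * Y j t) /
      (Real.sqrt (∑ t, Y i t ^ 2) * Real.sqrt (∑ t, Y j t ^ 2)))
    (S : Fin g → Matrix (Fin l) (Fin l) ℝ)
    (hS : ∀ m i j, S m i j =
      (∑ t : Fin (nm m), Y i ⟨m, t⟩ * Y j ⟨m, t⟩) /
      (Real.sqrt (∑ t : Fin (nm m), Y i ⟨m, t⟩ ^ 2) *
        Real.sqrt (∑ t : Fin (nm m), Y j ⟨m, t⟩ ^ 2))) :
    laplacian S0 = ∑ m, ((nm m : ℝ) / (n : ℝ)) • laplacian (S m) := by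
  have hsq : ∀ i (t : (m : Fin g) × Fin (nm m)), Y i t ^ 2 = 1 := by
    intro i t; rcases hY i t with h | h <;> simp [h]
  have hnorm : ∀ i, (∑ t, Y i t ^ 2) = (n : ℝ) := by
    intro i
    simp [hsq i, hn, Fintype.card_sigma]
  have hnormm : ∀ (m : Fin g) i, (∑ t : Fin (nm m), Y i ⟨m, t⟩ ^ 2) = (nm m : ℝ) := by
    intro m i; simp [hsq i]
  have hS0' : ∀ i j, S0 i j = (∑ t, Y i t * Y j t) / (n : ℝ) := by
    intro i j
    rw [hS0, hnorm, hnorm, Real.mul_self_sqrt (Nat.cast_nonneg n)]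
  have hS' : ∀ m i j, S m i j = (∑ t : Fin (nm m), Y i ⟨m, t⟩ * Y j ⟨m, t⟩) / (nm m : ℝ) := by
    intro m i j
    rw [hS, hnormm, hnormm, Real.mul_self_sqrt (Nat.cast_nonneg _)]
  have key : S0 = ∑ m, ((nm m : ℝ) / (n : ℝ)) • S m := by
    ext i j
    rw [hS0']
    simp only [Matrix.sum_apply, Matrix.smul_apply, smul_eq_mul, hS']
    rw [← Finset.univ_sigma_univ, Finset.sum_sigma]
    rw [Finset.sum_div]
    congr 1 with m
    have hm : (nm m : ℝ) ≠ 0 := Nat.cast_ne_zero.mpr (Nat.one_le_iff_ne_zero.mp (hnm m))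
    rw [div_mul_div_comm, mul_comm ((nm m : ℝ)), mul_div_mul_right _ _ hm]
  rw [key, lap_linear]
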